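/- Let F : ℝ^d → ℝ be M-smooth, η = 1/M, and x_{t+1} = x_t - η·g. Suppose ‖∇F(x_t)‖ ≥ γ and ‖g - ∇F(x_t)‖ ≤ γ/4 for some γ > 0. Then F(x_{t+1}) - F(x_t) ≤ -(η/16)·‖g‖². -/

import Mathlib

open RealInnerProductSpace

lemma descent_lemma {d : ℕ} (F : EuclideanSpace ℝ (Fin d) → ℝ)
    (gradF : EuclideanSpace ℝ (Fin d) → EuclideanSpace ℝ (Fin d))
    (M : ℝ) (hM : 0 < M)
    (hgrad : ∀ x, HasGradientAt F (gradF x) x)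
    (hsmooth : ∀ x y, ‖gradF x - gradF y‖ ≤ M * ‖x - y‖)
    (x v : EuclideanSpace ℝ (Fin d)) :
    F (x + v) ≤ F x + ⟪gradF x, v⟫ + M / 2 * ‖v‖ ^ 2 := by
  set ψ : ℝ → ℝ := fun t =>
    F (x + t • v) - t * ⟪gradF x, v⟫ - M / 2 * t ^ 2 * ‖v‖ ^ 2 with hψ
  have hc : ∀ t : ℝ, HasDerivAt (fun s : ℝ => x + s • v) v t := by
    intro t
    have h := (hasDerivAt_const t x).add ((hasDerivAt_id t).smul_const v)
    simp only [zero_add, one_smul] at h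
    exact h
  have hφ : ∀ t : ℝ, HasDerivAt (fun s : ℝ => F (x + s • v))
      ⟪gradF (x + t • v), v⟫ t := by
    intro t
    have := (hgrad (x + t • v)).hasFDerivAt.comp_hasDerivAt t (hc t)
    simp only [InnerProductSpace.toDual_apply_apply] at this
    exact this
  have hψ' : ∀ t : ℝ, HasDerivAt ψ
      (⟪gradF (x + t • v), v⟫ - ⟪gradF x, v⟫ - M * t * ‖v‖ ^ 2) t := by
    intro t
    have h1 : HasDerivAt (fun s : ℝ => s * ⟪gradF x, v⟫) ⟪gradF x, v⟫ t := by
      simpa using (hasDerivAt_id t).mul_const ⟪gradF x, v⟫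
    have h2 : HasDerivAt (fun s : ℝ => M / 2 * s ^ 2 * ‖v‖ ^ 2)
        (M * t * ‖v‖ ^ 2) t := by
      have := ((hasDerivAt_pow 2 t).const_mul (M / 2)).mul_const (‖v‖ ^ 2)
      refine this.congr_deriv ?_
      ring
    exact ((hφ t).sub h1).sub h2
  have hanti : AntitoneOn ψ (Set.Icc (0:ℝ) 1) := by
    apply antitoneOn_of_deriv_nonpos (convex_Icc 0 1)
    · exact fun t _ => (hψ' t).differentiableAt.continuousAt.continuousWithinAt
    · intro t ht
      exact (hψ' t).differentiableAt.differentiableWithinAt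
    · intro t ht
      rw [(hψ' t).deriv]
      simp only [interior_Icc, Set.mem_Ioo] at ht
      have key : ⟪gradF (x + t • v) - gradF x, v⟫ ≤ M * t * ‖v‖ ^ 2 := by
        calc ⟪gradF (x + t • v) - gradF x, v⟫ ≤ ‖gradF (x + t • v) - gradF x‖ * ‖v‖ :=
              real_inner_le_norm _ _
          _ ≤ (M * ‖(x + t • v) - x‖) * ‖v‖ := by
              gcongr; exact hsmooth _ _
          _ = M * t * ‖v‖ ^ 2 := by
              simp [norm_smul, abs_of_pos ht.1]; ring
      rw [inner_sub_left] at key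
      linarith
  have h01 := hanti (Set.left_mem_Icc.2 zero_le_one) (Set.right_mem_Icc.2 zero_le_one) zero_le_one
  simp only [hψ, zero_smul, add_zero, zero_mul, zero_pow, mul_zero, sub_zero, one_smul,
    one_mul, one_pow, mul_one] at h01
  linarith

theorem stmt_1 {d : ℕ} (F : EuclideanSpace ℝ (Fin d) → ℝ)
    (gradF : EuclideanSpace ℝ (Fin d) → EuclideanSpace ℝ (Fin d))
    (M η γ : ℝ) (hM : 0 < M) (hη : η = 1 / M) (hγ : 0 < γ)
    (hgrad : ∀ x, HasGradientAt F (gradF x) x)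
    (hsmooth : ∀ x y, ‖gradF x - gradF y‖ ≤ M * ‖x - y‖)
    (x g : EuclideanSpace ℝ (Fin d))
    (hlarge : γ ≤ ‖gradF x‖) (hacc : ‖g - gradF x‖ ≤ γ / 4) :
    F (x - η • g) - F x ≤ -(η / 16) * ‖g‖ ^ 2 := by
  have hη0 : 0 < η := by rw [hη]; positivity
  have hd := descent_lemma F gradF M hM hgrad hsmooth x (-(η • g))
  rw [← sub_eq_add_neg] at hd
  have hnorm : ‖-(η • g)‖ ^ 2 = η ^ 2 * ‖g‖ ^ 2 := by
    rw [norm_neg, norm_smul]; simp [abs_of_pos hη0]; ring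
  have hinner : ⟪gradF x, -(η • g)⟫ = -(η * ⟪gradF x, g⟫) := by
    rw [inner_neg_right, real_inner_smul_right]
  -- bound on ⟪gradF x, g⟫
  have hgb : 3 / 4 * γ ≤ ‖g‖ := by
    have := norm_sub_norm_le (gradF x) g
    have h2 : ‖gradF x - g‖ ≤ γ / 4 := by rwa [norm_sub_rev]
    linarith
  have hib : ⟪gradF x - g, g⟫ ≥ -(γ / 4 * ‖g‖) := by
    have h1 : |⟪gradF x - g, g⟫| ≤ ‖gradF x - g‖ * ‖g‖ := abs_real_inner_le_norm _ _
    have h2 : ‖gradF x - g‖ ≤ γ / 4 := by rwa [norm_sub_rev]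
    have hg0 : (0:ℝ) ≤ ‖g‖ := norm_nonneg _
    nlinarith [abs_le.1 h1]
  have hgg : ⟪g, g⟫ = ‖g‖ ^ 2 := real_inner_self_eq_norm_sq g
  rw [inner_sub_left, hgg] at hib
  have hlb : ⟪gradF x, g⟫ ≥ 2 / 3 * ‖g‖ ^ 2 := by
    have : γ / 4 * ‖g‖ ≤ 1 / 3 * ‖g‖ ^ 2 := by nlinarith [norm_nonneg g]
    linarith
  have hMη : M * η = 1 := by rw [hη]; field_simp
  rw [hinner, hnorm] at hd
  nlinarith [sq_nonneg ‖g‖, norm_nonneg g]
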